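/- Let p be a prime, d ≥ 1, and 1 ≤ j ≤ d. In the free associative F_p-algebra F_p⟨x_1,…,x_d⟩, let Λ^n denote the degree-n homogeneous component of the free Lie algebra on x_1,…,x_d, and consider the linear map f ↦ [f, x_j] = f x_j − x_j f. Then: (i) the restriction of this map to Λ^1 has kernel equal to the span of x_j; and (ii) for every n ≥ 2, the restriction of this map to Λ^n is injective, i.e., if f ∈ Λ^n and f x_j = x_j f, then f = 0. -/

import Mathlib

/-- The free associative `𝔽_p`-algebra (noncommutative polynomials) on `d` variables,
realized as the monoid algebra of the free monoid on `d` letters. -/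
abbrev FreeAssocAlg (p d : ℕ) := MonoidAlgebra (ZMod p) (FreeMonoid (Fin d))

/-- The generator `x_j`. -/
noncomputable def Xgen (p d : ℕ) (j : Fin d) : FreeAssocAlg p d :=
  MonoidAlgebra.single (FreeMonoid.of j) 1

/-- The degree-`n` homogeneous component: the `𝔽_p`-span of the words of length `n`. -/
noncomputable def homog (p d n : ℕ) : Submodule (ZMod p) (FreeAssocAlg p d) :=
  Submodule.span (ZMod p)
    {f | ∃ w : FreeMonoid (Fin d), w.length = n ∧ f = MonoidAlgebra.single w 1}

attribute [local instance 100] LieRing.ofAssociativeRing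

/-- The free Lie algebra on `x_1, …, x_d`: the Lie subalgebra (under `⁅f,g⁆ = fg - gf`)
of the free associative algebra generated by the `x_j`. -/
noncomputable def freeLie (p d : ℕ) : LieSubalgebra (ZMod p) (FreeAssocAlg p d) :=
  LieSubalgebra.lieSpan (ZMod p) _ (Set.range (Xgen p d))

/-- `Λ^n`: the degree-`n` homogeneous component of the free Lie algebra. -/
noncomputable def lamPart (p d n : ℕ) : Submodule (ZMod p) (FreeAssocAlg p d) :=
  homog p d n ⊓ (freeLie p d).toSubmodule

section Aux

variable {p d : ℕ} (j : Fin d)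

/-- The submodule of elements supported on words of length `n`. -/
noncomputable def homogBig (p d n : ℕ) : Submodule (ZMod p) (FreeAssocAlg p d) where
  carrier := {f | ∀ w ∈ f.coeff.support, FreeMonoid.length w = n}
  add_mem' := by
    classical
    intro a b ha hb w hw
    rw [MonoidAlgebra.coeff_add] at hw
    rcases Finset.mem_union.1 (Finsupp.support_add hw) with h | h
    · exact ha w h
    · exact hb w h
  zero_mem' := by intro w hw; simp at hw
  smul_mem' := by
    intro c f hf w hw
    rw [MonoidAlgebra.coeff_smul] at hw
    exact hf w (Finsupp.support_smul hw)

theorem mem_homogBig {n : ℕ} {f : FreeAssocAlg p d} :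
    f ∈ homogBig p d n ↔ ∀ w ∈ f.coeff.support, FreeMonoid.length w = n := Iff.rfl

theorem homog_le_homogBig (p d n : ℕ) : homog p d n ≤ homogBig p d n := by
  rw [homog, Submodule.span_le]
  rintro f ⟨w, hw, rfl⟩
  show ∀ u ∈ (MonoidAlgebra.single w (1 : ZMod p)).coeff.support, FreeMonoid.length u = n
  intro u hu
  classical
  have := Finsupp.support_single_subset hu
  simp only [Finset.mem_singleton] at this
  subst this; exact hw

theorem mul_Xgen (f : FreeAssocAlg p d) :
    (f * Xgen p d j).coeff = Finsupp.mapDomain (· * FreeMonoid.of j) f.coeff := by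
  classical
  rw [Xgen, MonoidAlgebra.mul_def, Finsupp.mapDomain, MonoidAlgebra.coeff_finsuppSum]
  refine Finsupp.sum_congr fun u hu => ?_
  rw [MonoidAlgebra.coeff_single, Finsupp.sum_single_index] <;> simp [MonoidAlgebra.coeff_single]

theorem Xgen_mul (f : FreeAssocAlg p d) :
    (Xgen p d j * f).coeff = Finsupp.mapDomain (FreeMonoid.of j * ·) f.coeff := by
  classical
  rw [Xgen, MonoidAlgebra.mul_def, Finsupp.mapDomain, MonoidAlgebra.coeff_single,
    Finsupp.sum_single_index, MonoidAlgebra.coeff_finsuppSum]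
  · refine Finsupp.sum_congr fun u hu => ?_
    simp [MonoidAlgebra.coeff_single]
  · simp

/-- Rotation step: if `f` commutes with `x_j`, `f u ≠ 0`, and `u ≠ 1`, then the first
letter of `u` is `j` and the left-rotation of `u` has the same coefficient. -/
theorem rotation_step (f : FreeAssocAlg p d)
    (hcomm : f * Xgen p d j = Xgen p d j * f)
    (u : FreeMonoid (Fin d)) (hu : f.coeff u ≠ 0) (hne : u ≠ 1) :
    ∃ u' : FreeMonoid (Fin d), u = FreeMonoid.of j * u' ∧ f.coeff (u' * FreeMonoid.of j) = f.coeff u := by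
  classical
  have h1 : ∀ w, Finsupp.mapDomain (· * FreeMonoid.of j) f.coeff w
      = Finsupp.mapDomain (FreeMonoid.of j * ·) f.coeff w := by
    intro w
    rw [← mul_Xgen, ← Xgen_mul, hcomm]
  have hinjR : Function.Injective (· * FreeMonoid.of j) :=
    fun a b h => mul_right_cancel h
  have hinjL : Function.Injective (FreeMonoid.of j * ·) :=
    fun a b h => mul_left_cancel h
  have hL : Finsupp.mapDomain (· * FreeMonoid.of j) f.coeff (u * FreeMonoid.of j) = f.coeff u :=
    Finsupp.mapDomain_apply hinjR f.coeff u
  -- decompose u = of a * u'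
  obtain ⟨a, u', rfl⟩ : ∃ a u', u = FreeMonoid.of a * u' := by
    rcases List.exists_cons_of_ne_nil (fun h => hne (congrArg FreeMonoid.ofList h)) with ⟨a, l, hl⟩
    exact ⟨a, FreeMonoid.ofList l, congrArg FreeMonoid.ofList hl⟩
  by_cases haj : a = j
  · subst haj
    refine ⟨u', rfl, ?_⟩
    have hR : Finsupp.mapDomain (FreeMonoid.of a * ·) f.coeff
        ((FreeMonoid.of a * u') * FreeMonoid.of a) = f.coeff (u' * FreeMonoid.of a) := by
      rw [mul_assoc]
      exact Finsupp.mapDomain_apply hinjL f.coeff (u' * FreeMonoid.of a)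
    rw [← hR, ← h1, hL]
  · exfalso
    have hnr : (FreeMonoid.of a * u') * FreeMonoid.of j ∉
        Set.range (FreeMonoid.of j * ·) := by
      rintro ⟨v, hv⟩
      have hv' := congrArg FreeMonoid.toList hv
      simp only [FreeMonoid.toList_mul, FreeMonoid.toList_of, List.singleton_append,
        List.cons_append, List.append_assoc] at hv'
      exact haj (List.cons_eq_cons.1 hv').1.symm
    have := Finsupp.mapDomain_notin_range f.coeff _ hnr
    rw [← h1, hL] at this
    exact hu this

/-- If `f` is homogeneous of degree `n ≥ 1` and commutes with `x_j`,
every word in its support is `j^n`. -/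
theorem support_replicate (n : ℕ) (hn : 1 ≤ n) (f : FreeAssocAlg p d)
    (hsupp : ∀ w ∈ f.coeff.support, FreeMonoid.length w = n)
    (hcomm : f * Xgen p d j = Xgen p d j * f) :
    ∀ u : FreeMonoid (Fin d), f.coeff u ≠ 0 → u = FreeMonoid.ofList (List.replicate n j) := by
  classical
  have key : ∀ k, k ≤ n → ∀ u : FreeMonoid (Fin d), f.coeff u ≠ 0 →
      (FreeMonoid.toList u).take k = List.replicate k j := by
    intro k
    induction k with
    | zero => intro _ u _; simp
    | succ k ih =>
      intro hk u hu
      have hlen : FreeMonoid.length u = n := hsupp u (Finsupp.mem_support_iff.2 hu)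
      have hne : u ≠ 1 := by
        intro h
        rw [h] at hlen
        simp [FreeMonoid.length_one] at hlen
        omega
      obtain ⟨u', rfl, hrot⟩ := rotation_step j f hcomm u hu hne
      have hu' : f.coeff (u' * FreeMonoid.of j) ≠ 0 := by rw [hrot]; exact hu
      have ihk := ih (le_of_lt (Nat.lt_of_lt_of_le (Nat.lt_succ_self k) hk)) _ hu'
      have h2 : 1 + FreeMonoid.length u' = n := by
        rw [FreeMonoid.length_mul, FreeMonoid.length_of] at hlen
        exact hlen
      have hlu : (FreeMonoid.toList u').length = FreeMonoid.length u' := rfl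
      have hku' : k ≤ (FreeMonoid.toList u').length := by omega
      have htake : (FreeMonoid.toList (u' * FreeMonoid.of j)).take k
          = (FreeMonoid.toList u').take k := by
        rw [FreeMonoid.toList_mul, FreeMonoid.toList_of]
        exact List.take_append_of_le_length hku'
      rw [htake] at ihk
      show (FreeMonoid.toList (FreeMonoid.of j * u')).take (k+1) = _
      rw [FreeMonoid.toList_mul, FreeMonoid.toList_of]
      simp only [List.singleton_append, List.take_succ_cons, ihk, List.replicate_succ]
  intro u hu
  have hlen : FreeMonoid.length u = n := hsupp u (Finsupp.mem_support_iff.2 hu)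
  have hkey := key n le_rfl u hu
  have hlen' : (FreeMonoid.toList u).length ≤ n := le_of_eq hlen
  rw [List.take_of_length_le hlen'] at hkey
  exact congrArg FreeMonoid.ofList hkey

/-- Consequence: such an `f` is a scalar multiple of `single (j^n) 1`. -/
theorem eq_single_replicate (n : ℕ) (hn : 1 ≤ n) (f : FreeAssocAlg p d)
    (hsupp : ∀ w ∈ f.coeff.support, FreeMonoid.length w = n)
    (hcomm : f * Xgen p d j = Xgen p d j * f) :
    f = MonoidAlgebra.single (FreeMonoid.ofList (List.replicate n j))
          (f.coeff (FreeMonoid.ofList (List.replicate n j))) := by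
  classical
  set ρ := FreeMonoid.ofList (List.replicate n j) with hρ
  ext w
  by_cases hw : w = ρ
  · subst hw; simp [MonoidAlgebra.coeff_single]
  · have : f.coeff w = 0 := by
      by_contra h
      exact hw (support_replicate j n hn f hsupp hcomm w h)
    rw [this]
    simp [MonoidAlgebra.coeff_single, Finsupp.single_apply, Ne.symm hw]

/-- The abelianizing evaluation `x_j ↦ X`, `x_i ↦ 0` into polynomials. -/
noncomputable def psi (p d : ℕ) (j : Fin d) :
    FreeAssocAlg p d →ₐ[ZMod p] Polynomial (ZMod p) :=
  MonoidAlgebra.lift (ZMod p) (Polynomial (ZMod p)) (FreeMonoid (Fin d))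
    (FreeMonoid.lift fun i => if i = j then Polynomial.X else 0)

theorem psi_freeLie (f : FreeAssocAlg p d) (hf : f ∈ freeLie p d) :
    psi p d j f ∈ Submodule.span (ZMod p) {(Polynomial.X : Polynomial (ZMod p))} := by
  classical
  set K : LieSubalgebra (ZMod p) (Polynomial (ZMod p)) :=
    { Submodule.span (ZMod p) {(Polynomial.X : Polynomial (ZMod p))} with
      lie_mem' := by
        intro x y _ _
        have : ⁅x, y⁆ = 0 := by
          rw [Ring.lie_def, mul_comm, sub_self]
        rw [this]
        exact Submodule.zero_mem _ } with hK
  have hle : freeLie p d ≤ K.comap (psi p d j).toLieHom := by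
    rw [freeLie]
    apply LieSubalgebra.lieSpan_le.2
    rintro _ ⟨i, rfl⟩
    show psi p d j (Xgen p d i) ∈ K
    have : psi p d j (Xgen p d i)
        = (if i = j then Polynomial.X else 0 : Polynomial (ZMod p)) := by
      rw [Xgen, psi, MonoidAlgebra.lift_single, FreeMonoid.lift_eval_of, one_smul]
    rw [this]
    by_cases h : i = j
    · simp only [h, if_pos rfl]
      exact Submodule.mem_span_singleton_self _
    · simp only [if_neg h]
      exact Submodule.zero_mem _
  exact hle hf

theorem psi_single_replicate (n : ℕ) (c : ZMod p) :
    psi p d j (MonoidAlgebra.single (FreeMonoid.ofList (List.replicate n j)) c)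
      = c • (Polynomial.X : Polynomial (ZMod p)) ^ n := by
  rw [psi, MonoidAlgebra.lift_single]
  congr 1
  rw [FreeMonoid.lift_apply]
  have : FreeMonoid.toList (FreeMonoid.ofList (List.replicate n j)) = List.replicate n j := rfl
  rw [this, List.map_replicate, if_pos rfl, List.prod_replicate]

end Aux

/-- **Lemma (injectivity of bracketing with a generator on the free Lie algebra).**
In the free associative `𝔽_p`-algebra on `x_1, …, x_d`, consider `f ↦ [f, x_j]`.
(i) On `Λ^1` its kernel is the span of `x_j`; (ii) for `n ≥ 2` it is injective on `Λ^n`. -/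
theorem bracket_with_generator_injective (p d : ℕ) [Fact p.Prime] (hd : 1 ≤ d) (j : Fin d) :
    (∀ f ∈ lamPart p d 1,
      (f * Xgen p d j - Xgen p d j * f = 0 ↔
        f ∈ Submodule.span (ZMod p) {Xgen p d j})) ∧
    (∀ n : ℕ, 2 ≤ n → ∀ f ∈ lamPart p d n,
      f * Xgen p d j = Xgen p d j * f → f = 0) := by
  classical
  constructor
  · intro f hf
    constructor
    · intro h0
      have hcomm : f * Xgen p d j = Xgen p d j * f := sub_eq_zero.1 h0
      have hsupp : ∀ w ∈ f.coeff.support, FreeMonoid.length w = 1 :=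
        mem_homogBig.1 (homog_le_homogBig p d 1 hf.1)
      have := eq_single_replicate j 1 le_rfl f hsupp hcomm
      rw [this]
      have hrep : FreeMonoid.ofList (List.replicate 1 j) = FreeMonoid.of j := rfl
      rw [hrep]
      refine Submodule.mem_span_singleton.2
        ⟨f.coeff (FreeMonoid.of j), ?_⟩
      rw [Xgen]
      ext w
      simp [MonoidAlgebra.coeff_single, Finsupp.smul_single]
    · intro hmem
      obtain ⟨c, rfl⟩ := Submodule.mem_span_singleton.1 hmem
      rw [smul_mul_assoc, mul_smul_comm, sub_self]
  · intro n hn f hf hcomm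
    have hsupp : ∀ w ∈ f.coeff.support, FreeMonoid.length w = n :=
      mem_homogBig.1 (homog_le_homogBig p d n hf.1)
    have hf1 := eq_single_replicate j n (by omega) f hsupp hcomm
    have hψ : psi p d j f
        = f.coeff (FreeMonoid.ofList (List.replicate n j)) • (Polynomial.X : Polynomial (ZMod p)) ^ n := by
      conv_lhs => rw [hf1]
      exact psi_single_replicate j n _
    have hmem := psi_freeLie j f hf.2
    rw [hψ] at hmem
    obtain ⟨a, ha⟩ := Submodule.mem_span_singleton.1 hmem
    have hc0 : f.coeff (FreeMonoid.ofList (List.replicate n j)) = 0 := by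
      have hcoeff := congrArg (fun q => Polynomial.coeff q n) ha
      simp only [Polynomial.coeff_smul, Polynomial.coeff_X, Polynomial.coeff_X_pow,
        if_pos rfl, smul_eq_mul, mul_one] at hcoeff
      rw [if_neg (by omega : ¬ (1 : ℕ) = n), mul_zero] at hcoeff
      simpa using hcoeff.symm
    rw [hf1, hc0]
    simp
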